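/- With 𝓛 as above and with φ_1, φ_2, φ_3 real numbers whose pairwise differences are not multiples of π, the inverse of 𝓛 equals 𝓚·𝓜, where 𝓚 is the diagonal matrix with entries -K_a/(sin(φ_b-φ_a)·sin(φ_c-φ_a)) for {a,b,c} = {1,2,3}, and 𝓜 is the 3×3 matrix whose a-th row is (8 sin φ_b sin φ_c, 4(2 sin φ_b sin φ_c + √-1 sin(φ_b+φ_c)), -2 e^{-√-1(φ_b+φ_c)}) where {b,c} = {1,2,3}\{a}. -/
import Mathlib

open Complex Matrix

lemma expNeg (x : ℝ) : Complex.exp (-(Complex.I * (x:ℂ)))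
    = (Real.cos x : ℂ) - Complex.I * (Real.sin x : ℂ) := by
  rw [show -(Complex.I * (x:ℂ)) = ((-x : ℝ):ℂ) * Complex.I by push_cast; ring,
    Complex.exp_mul_I, ← Complex.ofReal_cos, ← Complex.ofReal_sin]
  push_cast [Real.cos_neg, Real.sin_neg]
  ring

lemma expNeg2 (x : ℝ) : Complex.exp (-(2 * Complex.I * (x:ℂ)))
    = ((Real.cos x : ℂ) - Complex.I * (Real.sin x : ℂ))^2 := by
  rw [show -(2 * Complex.I * (x:ℂ)) = -(Complex.I * x) + -(Complex.I * x) by ring,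
    Complex.exp_add, expNeg]
  ring

lemma expNegAdd (x y : ℝ) : Complex.exp (-(Complex.I * ((x:ℂ) + (y:ℂ))))
    = ((Real.cos x : ℂ) - Complex.I * (Real.sin x : ℂ)) *
      ((Real.cos y : ℂ) - Complex.I * (Real.sin y : ℂ)) := by
  rw [show -(Complex.I * ((x:ℂ)+(y:ℂ))) = -(Complex.I * x) + -(Complex.I * y) by ring,
    Complex.exp_add, expNeg, expNeg]

lemma sinAdd (x y : ℝ) : ((Real.sin (x + y) : ℝ):ℂ)
    = (Real.sin x : ℂ) * (Real.cos y : ℂ) + (Real.cos x : ℂ) * (Real.sin y : ℂ) := by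
  rw [Real.sin_add]; push_cast; ring

lemma sinSub (x y : ℝ) : ((Real.sin (x - y) : ℝ):ℂ)
    = (Real.sin x : ℂ) * (Real.cos y : ℂ) - (Real.cos x : ℂ) * (Real.sin y : ℂ) := by
  rw [Real.sin_sub]; push_cast; ring

set_option maxHeartbeats 1000000 in
/-- With `𝓛` as in the paper and `φ₁, φ₂, φ₃` real with pairwise differences having
nonzero sine, the inverse of `𝓛` equals `𝓚·𝓜`,
where `𝓚 = diag(-K_a/(sin(φ_b-φ_a) sin(φ_c-φ_a)))` and `𝓜` has rows
`(8 sin φ_b sin φ_c, 4(2 sin φ_b sin φ_c + I sin(φ_b+φ_c)), -2 e^{-I(φ_b+φ_c)})`. -/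
theorem stmt7 (φ₁ φ₂ φ₃ : ℝ) (K₁ K₂ K₃ : ℂ)
    (hK₁ : K₁ ≠ 0) (hK₂ : K₂ ≠ 0) (hK₃ : K₃ ≠ 0)
    (h12 : Real.sin (φ₁ - φ₂) ≠ 0) (h23 : Real.sin (φ₂ - φ₃) ≠ 0)
    (h31 : Real.sin (φ₃ - φ₁) ≠ 0)
    (L : Matrix (Fin 3) (Fin 3) ℂ)
    (hL : L = Matrix.of ![
      ![-Complex.exp (-(2 * Complex.I * (φ₁:ℂ))) / (8 * K₁),
        -Complex.exp (-(2 * Complex.I * (φ₂:ℂ))) / (8 * K₂),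
        -Complex.exp (-(2 * Complex.I * (φ₃:ℂ))) / (8 * K₃)],
      ![-Complex.I * Complex.exp (-(Complex.I * (φ₁:ℂ))) * (Real.sin φ₁ : ℂ) / (4 * K₁),
        -Complex.I * Complex.exp (-(Complex.I * (φ₂:ℂ))) * (Real.sin φ₂ : ℂ) / (4 * K₂),
        -Complex.I * Complex.exp (-(Complex.I * (φ₃:ℂ))) * (Real.sin φ₃ : ℂ) / (4 * K₃)],
      ![((Real.sin φ₁ : ℂ))^2 / (2 * K₁),
        ((Real.sin φ₂ : ℂ))^2 / (2 * K₂),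
        ((Real.sin φ₃ : ℂ))^2 / (2 * K₃)]])
    (𝓚 : Matrix (Fin 3) (Fin 3) ℂ)
    (h𝓚 : 𝓚 = Matrix.diagonal ![
      -K₁ / ((Real.sin (φ₂ - φ₁) : ℂ) * (Real.sin (φ₃ - φ₁) : ℂ)),
      -K₂ / ((Real.sin (φ₃ - φ₂) : ℂ) * (Real.sin (φ₁ - φ₂) : ℂ)),
      -K₃ / ((Real.sin (φ₁ - φ₃) : ℂ) * (Real.sin (φ₂ - φ₃) : ℂ))])
    (𝓜 : Matrix (Fin 3) (Fin 3) ℂ)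
    (h𝓜 : 𝓜 = Matrix.of ![
      ![8 * (Real.sin φ₂ : ℂ) * (Real.sin φ₃ : ℂ),
        4 * (2 * (Real.sin φ₂ : ℂ) * (Real.sin φ₃ : ℂ) + Complex.I * (Real.sin (φ₂ + φ₃) : ℂ)),
        -2 * Complex.exp (-(Complex.I * ((φ₂ : ℂ) + (φ₃ : ℂ))))],
      ![8 * (Real.sin φ₁ : ℂ) * (Real.sin φ₃ : ℂ),
        4 * (2 * (Real.sin φ₁ : ℂ) * (Real.sin φ₃ : ℂ) + Complex.I * (Real.sin (φ₃ + φ₁) : ℂ)),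
        -2 * Complex.exp (-(Complex.I * ((φ₁ : ℂ) + (φ₃ : ℂ))))],
      ![8 * (Real.sin φ₁ : ℂ) * (Real.sin φ₂ : ℂ),
        4 * (2 * (Real.sin φ₁ : ℂ) * (Real.sin φ₂ : ℂ) + Complex.I * (Real.sin (φ₁ + φ₂) : ℂ)),
        -2 * Complex.exp (-(Complex.I * ((φ₁ : ℂ) + (φ₂ : ℂ))))]]) :
    𝓚 * 𝓜 * L = 1 ∧ L⁻¹ = 𝓚 * 𝓜 := by
  have s12 : ((Real.sin (φ₁ - φ₂) : ℝ):ℂ) ≠ 0 := Complex.ofReal_ne_zero.mpr h12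
  have s23 : ((Real.sin (φ₂ - φ₃) : ℝ):ℂ) ≠ 0 := Complex.ofReal_ne_zero.mpr h23
  have s31 : ((Real.sin (φ₃ - φ₁) : ℝ):ℂ) ≠ 0 := Complex.ofReal_ne_zero.mpr h31
  have hns : ∀ x y : ℝ, ((Real.sin (x - y) : ℝ):ℂ) ≠ 0 → ((Real.sin (y - x) : ℝ):ℂ) ≠ 0 := by
    intro x y h
    rw [← neg_sub x y, Real.sin_neg, Complex.ofReal_neg]
    exact neg_ne_zero.mpr h
  have s21 := hns _ _ s12
  have s32 := hns _ _ s23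
  have s13 := hns _ _ s31
  have hD : 𝓜 * L = Matrix.diagonal ![
      -((Real.sin (φ₂ - φ₁) : ℂ) * (Real.sin (φ₃ - φ₁) : ℂ)) / K₁,
      -((Real.sin (φ₃ - φ₂) : ℂ) * (Real.sin (φ₁ - φ₂) : ℂ)) / K₂,
      -((Real.sin (φ₁ - φ₃) : ℂ) * (Real.sin (φ₂ - φ₃) : ℂ)) / K₃] := by
    subst hL h𝓜
    ext i j
    fin_cases i <;> fin_cases j <;>
      simp only [Matrix.mul_apply, Fin.sum_univ_three, Matrix.of_apply, Matrix.cons_val',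
        Matrix.cons_val_zero, Matrix.cons_val_one, Matrix.head_cons, Matrix.empty_val',
        Matrix.cons_val_fin_one, Matrix.head_fin_const, Matrix.cons_val_two, Matrix.tail_cons,
        Fin.isValue, Fin.mk_zero, Fin.mk_one, Fin.reduceEq, ne_eq, not_false_eq_true,
        Matrix.diagonal_apply_ne, Matrix.diagonal_apply_eq, Fin.zero_eta, Fin.reduceFinMk] <;>
      simp only [expNeg, expNeg2, expNegAdd, sinAdd, sinSub]
-- entry (0,0)
    · linear_combination ((1 : ℂ) * (Real.sin φ₁ : ℂ)^2 * (Real.sin φ₂ : ℂ) * (Real.cos φ₃ : ℂ) * Complex.I * K₁⁻¹ + (1 : ℂ) * (Real.sin φ₁ : ℂ)^2 * (Real.cos φ₂ : ℂ) * (Real.sin φ₃ : ℂ) * Complex.I * K₁⁻¹ + (-1 : ℂ) * (Real.cos φ₁ : ℂ) * (Real.sin φ₁ : ℂ) * (Real.sin φ₂ : ℂ) * (Real.cos φ₃ : ℂ) * K₁⁻¹ + (-1 : ℂ) * (Real.cos φ₁ : ℂ) * (Real.sin φ₁ : ℂ) * (Real.cos φ₂ : ℂ) * (Real.sin φ₃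 : ℂ) * K₁⁻¹) * Complex.I_sq
-- entry (0,1)
    · linear_combination ((1 : ℂ) * (Real.sin φ₂ : ℂ)^3 * (Real.cos φ₃ : ℂ) * Complex.I * K₂⁻¹ + (1 : ℂ) * (Real.cos φ₂ : ℂ) * (Real.sin φ₂ : ℂ)^2 * (Real.sin φ₃ : ℂ) * Complex.I * K₂⁻¹ + (-1 : ℂ) * (Real.cos φ₂ : ℂ) * (Real.sin φ₂ : ℂ)^2 * (Real.cos φ₃ : ℂ) * K₂⁻¹ + (-1 : ℂ) * (Real.cos φ₂ : ℂ)^2 * (Real.sin φ₂ : ℂ) * (Real.sin φ₃ : ℂ) * K₂⁻¹) * Complex.I_sq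
-- entry (0,2)
    · linear_combination ((1 : ℂ) * (Real.sin φ₂ : ℂ) * (Real.cos φ₃ : ℂ) * (Real.sin φ₃ : ℂ)^2 * Complex.I * K₃⁻¹ + (-1 : ℂ) * (Real.sin φ₂ : ℂ) * (Real.cos φ₃ : ℂ)^2 * (Real.sin φ₃ : ℂ) * K₃⁻¹ + (1 : ℂ) * (Real.cos φ₂ : ℂ) * (Real.sin φ₃ : ℂ)^3 * Complex.I * K₃⁻¹ + (-1 : ℂ) * (Real.cos φ₂ : ℂ) * (Real.cos φ₃ : ℂ) * (Real.sin φ₃ : ℂ)^2 * K₃⁻¹) * Complex.I_sq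
-- entry (1,0)
    · linear_combination ((1 : ℂ) * (Real.sin φ₁ : ℂ)^3 * (Real.cos φ₃ : ℂ) * Complex.I * K₁⁻¹ + (1 : ℂ) * (Real.cos φ₁ : ℂ) * (Real.sin φ₁ : ℂ)^2 * (Real.sin φ₃ : ℂ) * Complex.I * K₁⁻¹ + (-1 : ℂ) * (Real.cos φ₁ : ℂ) * (Real.sin φ₁ : ℂ)^2 * (Real.cos φ₃ : ℂ) * K₁⁻¹ + (-1 : ℂ) * (Real.cos φ₁ : ℂ)^2 * (Real.sin φ₁ : ℂ) * (Real.sin φ₃ : ℂ) * K₁⁻¹) * Complex.I_sq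
-- entry (1,1)
    · linear_combination ((1 : ℂ) * (Real.sin φ₁ : ℂ) * (Real.sin φ₂ : ℂ)^2 * (Real.cos φ₃ : ℂ) * Complex.I * K₂⁻¹ + (-1 : ℂ) * (Real.sin φ₁ : ℂ) * (Real.cos φ₂ : ℂ) * (Real.sin φ₂ : ℂ) * (Real.cos φ₃ : ℂ) * K₂⁻¹ + (1 : ℂ) * (Real.cos φ₁ : ℂ) * (Real.sin φ₂ : ℂ)^2 * (Real.sin φ₃ : ℂ) * Complex.I * K₂⁻¹ + (-1 : ℂ) * (Real.cos φ₁ : ℂ) * (Real.cos φ₂ : ℂ) * (Real.sin φ₂ : ℂ) * (Real.sin φ₃ : ℂ) * K₂⁻¹) * Complex.I_sq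
-- entry (1,2)
    · linear_combination ((1 : ℂ) * (Real.sin φ₁ : ℂ) * (Real.cos φ₃ : ℂ) * (Real.sin φ₃ : ℂ)^2 * Complex.I * K₃⁻¹ + (-1 : ℂ) * (Real.sin φ₁ : ℂ) * (Real.cos φ₃ : ℂ)^2 * (Real.sin φ₃ : ℂ) * K₃⁻¹ + (1 : ℂ) * (Real.cos φ₁ : ℂ) * (Real.sin φ₃ : ℂ)^3 * Complex.I * K₃⁻¹ + (-1 : ℂ) * (Real.cos φ₁ : ℂ) * (Real.cos φ₃ : ℂ) * (Real.sin φ₃ : ℂ)^2 * K₃⁻¹) * Complex.I_sq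
-- entry (2,0)
    · linear_combination ((1 : ℂ) * (Real.sin φ₁ : ℂ)^3 * (Real.cos φ₂ : ℂ) * Complex.I * K₁⁻¹ + (1 : ℂ) * (Real.cos φ₁ : ℂ) * (Real.sin φ₁ : ℂ)^2 * (Real.sin φ₂ : ℂ) * Complex.I * K₁⁻¹ + (-1 : ℂ) * (Real.cos φ₁ : ℂ) * (Real.sin φ₁ : ℂ)^2 * (Real.cos φ₂ : ℂ) * K₁⁻¹ + (-1 : ℂ) * (Real.cos φ₁ : ℂ)^2 * (Real.sin φ₁ : ℂ) * (Real.sin φ₂ : ℂ) * K₁⁻¹) * Complex.I_sq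
-- entry (2,1)
    · linear_combination ((1 : ℂ) * (Real.sin φ₁ : ℂ) * (Real.cos φ₂ : ℂ) * (Real.sin φ₂ : ℂ)^2 * Complex.I * K₂⁻¹ + (-1 : ℂ) * (Real.sin φ₁ : ℂ) * (Real.cos φ₂ : ℂ)^2 * (Real.sin φ₂ : ℂ) * K₂⁻¹ + (1 : ℂ) * (Real.cos φ₁ : ℂ) * (Real.sin φ₂ : ℂ)^3 * Complex.I * K₂⁻¹ + (-1 : ℂ) * (Real.cos φ₁ : ℂ) * (Real.cos φ₂ : ℂ) * (Real.sin φ₂ : ℂ)^2 * K₂⁻¹) * Complex.I_sq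
-- entry (2,2)
    · linear_combination ((1 : ℂ) * (Real.sin φ₁ : ℂ) * (Real.cos φ₂ : ℂ) * (Real.sin φ₃ : ℂ)^2 * Complex.I * K₃⁻¹ + (-1 : ℂ) * (Real.sin φ₁ : ℂ) * (Real.cos φ₂ : ℂ) * (Real.cos φ₃ : ℂ) * (Real.sin φ₃ : ℂ) * K₃⁻¹ + (1 : ℂ) * (Real.cos φ₁ : ℂ) * (Real.sin φ₂ : ℂ) * (Real.sin φ₃ : ℂ)^2 * Complex.I * K₃⁻¹ + (-1 : ℂ) * (Real.cos φ₁ : ℂ) * (Real.sin φ₂ : ℂ) * (Real.cos φ₃ : ℂ) * (Real.sin φ₃ : ℂ) * K₃⁻¹) * Complex.I_sq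

  have t21 : Complex.sin ((φ₂:ℂ) - (φ₁:ℂ)) ≠ 0 := by
    rw [← Complex.ofReal_sub, ← Complex.ofReal_sin]; exact s21
  have t31 : Complex.sin ((φ₃:ℂ) - (φ₁:ℂ)) ≠ 0 := by
    rw [← Complex.ofReal_sub, ← Complex.ofReal_sin]; exact s31
  have t32 : Complex.sin ((φ₃:ℂ) - (φ₂:ℂ)) ≠ 0 := by
    rw [← Complex.ofReal_sub, ← Complex.ofReal_sin]; exact s32
  have t12 : Complex.sin ((φ₁:ℂ) - (φ₂:ℂ)) ≠ 0 := by
    rw [← Complex.ofReal_sub, ← Complex.ofReal_sin]; exact s12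
  have t13 : Complex.sin ((φ₁:ℂ) - (φ₃:ℂ)) ≠ 0 := by
    rw [← Complex.ofReal_sub, ← Complex.ofReal_sin]; exact s13
  have t23 : Complex.sin ((φ₂:ℂ) - (φ₃:ℂ)) ≠ 0 := by
    rw [← Complex.ofReal_sub, ← Complex.ofReal_sin]; exact s23
  have h1 : 𝓚 * 𝓜 * L = 1 := by
    rw [Matrix.mul_assoc, hD, h𝓚, Matrix.diagonal_mul_diagonal]
    ext i j
    fin_cases i <;> fin_cases j <;>
      simp [Matrix.diagonal_apply, Matrix.one_apply] <;>
      field_simp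
  exact ⟨h1, Matrix.inv_eq_left_inv h1⟩
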